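/- Let n ≥ 2 be an integer and set x_k = cos(kπ/n) for k = 0, 1, …, n (so x_1, …, x_{n−1} are the zeros of T_n′ and x_0 = 1, x_n = −1). For a differentiable function f define ℓ_k(x) = T_n′(x)/((x − x_k)·T_n′′(x_k)) for 1 ≤ k ≤ n−1, and 𝓛_k(f;x) = (1 − x_k·x)·f(x_k) + (1 − x_k²)·(x − x_k)·f′(x_k). Then for every polynomial f of degree at most 2n−1 and every real x, f(x) = ((T_n′(x))²/(2n⁴))·((1+x)·f(x_0) + (1−x)·f(x_n)) + (1−x²)·Σ_{k=1}^{n−1} (ℓ_k(x)²/(1−x_k²)²)·𝓛_k(f;x). -/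

import Mathlib

open Polynomial Real

/-- The `n`-th Chebyshev polynomial of the first kind, as a real polynomial. -/
noncomputable def chebT (n : ℕ) : Polynomial ℝ := Polynomial.Chebyshev.T ℝ (n : ℤ)

/-- `xk n k = cos(kπ/n)`, the interpolation nodes (`x_1, …, x_{n-1}` are the
zeros of `T_n'`, and `x_0 = 1`, `x_n = -1`). -/
noncomputable def xk (n k : ℕ) : ℝ := Real.cos (k * π / n)

/-- The Lagrange basis polynomial `ℓ_k(x) = T_n'(x)/((x - x_k) T_n''(x_k))` for
interpolation at the zeros of `T_n'`; since `x_k` is a root of `T_n'`, the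
polynomial division `T_n' / (X - x_k)` is exact. -/
noncomputable def ell (n k : ℕ) (x : ℝ) : ℝ :=
  (derivative (chebT n) / (X - C (xk n k))).eval x
    / (derivative (derivative (chebT n))).eval (xk n k)

/-- `𝓛_k(f;x) = (1 - x_k x) f(x_k) + (1 - x_k²)(x - x_k) f'(x_k)` for a polynomial `f`. -/
noncomputable def Lk (n k : ℕ) (f : Polynomial ℝ) (x : ℝ) : ℝ :=
  (1 - xk n k * x) * f.eval (xk n k)
    + (1 - xk n k ^ 2) * (x - xk n k) * (derivative f).eval (xk n k)

/-! ### Trigonometric identities for `T`, `T'`, `T''`, `T'''` -/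

lemma chebT_eval_cos (n : ℕ) (θ : ℝ) : (chebT n).eval (cos θ) = cos (n * θ) := by
  have := Polynomial.Chebyshev.T_real_cos θ (n : ℤ)
  rw [chebT, this]; push_cast; ring_nf

lemma D_eval_cos (n : ℕ) (θ : ℝ) :
    (derivative (chebT n)).eval (cos θ) * sin θ = n * sin (n * θ) := by
  rw [chebT, Polynomial.Chebyshev.T_derivative_eq_U]
  have h := Polynomial.Chebyshev.U_real_cos θ ((n : ℤ) - 1)
  simp only [eval_mul, eval_intCast, Int.cast_natCast]
  rw [mul_assoc, h]
  norm_num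

lemma hasDerivAt_evalCos (p : ℝ[X]) (θ : ℝ) :
    HasDerivAt (fun θ => p.eval (cos θ)) ((derivative p).eval (cos θ) * (-sin θ)) θ :=
  (p.hasDerivAt (cos θ)).comp θ (Real.hasDerivAt_cos θ)

lemma hasDerivAt_nsin (c : ℝ) (θ : ℝ) :
    HasDerivAt (fun θ : ℝ => sin (c * θ)) (cos (c * θ) * c) θ := by
  have h := (Real.hasDerivAt_sin (c * θ)).comp θ ((hasDerivAt_id θ).const_mul c)
  simp only [mul_one] at h
  exact h

lemma identity1 (n : ℕ) (θ : ℝ) :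
    (derivative (derivative (chebT n))).eval (cos θ) * (-(sin θ * sin θ))
      + (derivative (chebT n)).eval (cos θ) * cos θ = (n : ℝ)^2 * cos (n * θ) := by
  have hfun : (fun θ => (derivative (chebT n)).eval (cos θ) * sin θ)
      = fun θ => (n : ℝ) * sin (n * θ) := funext (D_eval_cos n)
  have hL := (hasDerivAt_evalCos (derivative (chebT n)) θ).mul (Real.hasDerivAt_sin θ)
  change HasDerivAt (fun θ => (derivative (chebT n)).eval (cos θ) * sin θ) _ θ at hL
  rw [hfun] at hL
  have hR := (hasDerivAt_nsin (n : ℝ) θ).const_mul (n : ℝ)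
  have := hL.unique hR
  ring_nf at this ⊢
  linarith [this]

lemma identity2 (n : ℕ) (θ : ℝ) :
    (derivative (derivative (derivative (chebT n)))).eval (cos θ) * (sin θ)^3
      - 3 * (derivative (derivative (chebT n))).eval (cos θ) * sin θ * cos θ
      - (derivative (chebT n)).eval (cos θ) * sin θ = -(n : ℝ)^3 * sin (n * θ) := by
  have hfun : (fun θ => (derivative (derivative (chebT n))).eval (cos θ) * (-(sin θ * sin θ))
      + (derivative (chebT n)).eval (cos θ) * cos θ)
      = fun θ => (n : ℝ)^2 * cos (n * θ) := funext (identity1 n)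
  have hL := ((hasDerivAt_evalCos (derivative (derivative (chebT n))) θ).mul
      ((Real.hasDerivAt_sin θ).mul (Real.hasDerivAt_sin θ)).neg).add
    ((hasDerivAt_evalCos (derivative (chebT n)) θ).mul (Real.hasDerivAt_cos θ))
  change HasDerivAt (fun θ => (derivative (derivative (chebT n))).eval (cos θ) * (-(sin θ * sin θ))
      + (derivative (chebT n)).eval (cos θ) * cos θ) _ θ at hL
  rw [hfun] at hL
  simp only [Pi.neg_apply, Pi.mul_apply] at hL
  have hR : HasDerivAt (fun θ : ℝ => (n : ℝ)^2 * cos (n * θ)) ((n:ℝ)^2 * (-sin (n*θ) * n)) θ := by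
    simpa [Function.comp, mul_comm, mul_assoc, mul_left_comm] using
      (((Real.hasDerivAt_cos ((n:ℝ) * θ)).comp θ ((hasDerivAt_id θ).const_mul (n:ℝ)))).const_mul ((n:ℝ)^2)
  have := hL.unique hR
  ring_nf at this ⊢
  linarith [this]

/-! ### Values at the nodes -/

lemma cos_k_pi (k : ℕ) : cos ((k:ℝ) * π) = (-1)^k := by
  simpa using Real.cos_add_nat_mul_pi 0 k

lemma sin_theta_pos {n k : ℕ} (hn : 2 ≤ n) (hk1 : 1 ≤ k) (hk2 : k ≤ n - 1) :
    0 < sin ((k : ℝ) * π / n) := by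
  have hn0 : (0:ℝ) < n := by positivity
  have hk1' : (1:ℝ) ≤ k := by exact_mod_cast hk1
  have hk2' : (k:ℝ) < n := by exact_mod_cast lt_of_le_of_lt hk2 (Nat.sub_lt (by omega) one_pos)
  refine sin_pos_of_pos_of_lt_pi (by positivity) ?_
  rw [div_lt_iff₀ hn0]; nlinarith [pi_pos]

lemma n_theta (n k : ℕ) (hn : 2 ≤ n) : (n : ℝ) * ((k : ℝ) * π / n) = k * π := by
  have hn0 : (n:ℝ) ≠ 0 := by positivity
  field_simp

lemma sq_sin_theta (n k : ℕ) : sin ((k : ℝ) * π / n) ^ 2 = 1 - xk n k ^ 2 := by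
  rw [xk]; nlinarith [sin_sq_add_cos_sq ((k : ℝ) * π / n)]

lemma one_sub_xk_sq_pos {n k : ℕ} (hn : 2 ≤ n) (hk1 : 1 ≤ k) (hk2 : k ≤ n - 1) :
    0 < 1 - xk n k ^ 2 := by
  rw [← sq_sin_theta]
  have := sin_theta_pos hn hk1 hk2
  positivity

lemma D_at_xk {n k : ℕ} (hn : 2 ≤ n) (hk1 : 1 ≤ k) (hk2 : k ≤ n - 1) :
    (derivative (chebT n)).eval (xk n k) = 0 := by
  have h := D_eval_cos n ((k : ℝ) * π / n)
  rw [n_theta n k hn, sin_nat_mul_pi, mul_zero] at h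
  have hs := sin_theta_pos hn hk1 hk2
  rw [xk]
  rcases mul_eq_zero.mp h with h' | h'
  · exact h'
  · linarith

lemma D1_at_xk {n k : ℕ} (hn : 2 ≤ n) (hk1 : 1 ≤ k) (hk2 : k ≤ n - 1) :
    (derivative (derivative (chebT n))).eval (xk n k) * (1 - xk n k ^ 2) = (-1)^(k+1) * n^2 := by
  have h := identity1 n ((k : ℝ) * π / n)
  rw [n_theta n k hn, cos_k_pi, ← xk, D_at_xk hn hk1 hk2, zero_mul, add_zero] at h
  have hs2 := sq_sin_theta n k
  linear_combination -h - (derivative (derivative (chebT n))).eval (xk n k) * hs2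
    - (n:ℝ)^2 * (pow_succ (-1:ℝ) k)

lemma D1_at_xk_ne {n k : ℕ} (hn : 2 ≤ n) (hk1 : 1 ≤ k) (hk2 : k ≤ n - 1) :
    (derivative (derivative (chebT n))).eval (xk n k) ≠ 0 := by
  intro h
  have h1 := D1_at_xk hn hk1 hk2
  rw [h, zero_mul] at h1
  have hn0 : (0:ℝ) < (n:ℝ)^2 := by positivity
  rcases Nat.even_or_odd (k+1) with he | ho
  · rw [he.neg_one_pow] at h1; linarith
  · rw [ho.neg_one_pow] at h1; linarith

lemma D2_at_xk {n k : ℕ} (hn : 2 ≤ n) (hk1 : 1 ≤ k) (hk2 : k ≤ n - 1) :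
    (derivative (derivative (derivative (chebT n)))).eval (xk n k) * (1 - xk n k ^ 2)
      = 3 * xk n k * (derivative (derivative (chebT n))).eval (xk n k) := by
  have h := identity2 n ((k : ℝ) * π / n)
  rw [n_theta n k hn, sin_nat_mul_pi, ← xk, D_at_xk hn hk1 hk2, zero_mul, mul_zero] at h
  have hs2 := sq_sin_theta n k
  have hs := sin_theta_pos hn hk1 hk2
  have h' : ((derivative (derivative (derivative (chebT n)))).eval (xk n k) * (sin ((k:ℝ)*π/n))^2
      - 3 * (derivative (derivative (chebT n))).eval (xk n k) * xk n k) * sin ((k:ℝ)*π/n) = 0 := by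
    linear_combination h
  have h2 := (mul_eq_zero.mp h').resolve_right (by linarith)
  linear_combination h2 - (derivative (derivative (derivative (chebT n)))).eval (xk n k) * hs2

lemma xk_zero (n : ℕ) : xk n 0 = 1 := by simp [xk]

lemma xk_n (n : ℕ) (hn : 2 ≤ n) : xk n n = -1 := by
  have hn0 : (n:ℝ) ≠ 0 := by positivity
  have h : (n:ℝ) * π / n = π := by field_simp
  rw [xk, h, Real.cos_pi]

lemma D_at_one (n : ℕ) : (derivative (chebT n)).eval 1 = n^2 := by
  have h := identity1 n 0
  simpa using h

lemma D_at_negone (n : ℕ) : (derivative (chebT n)).eval (-1) = (-1)^(n+1) * n^2 := by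
  have h := identity1 n π
  rw [Real.cos_pi, Real.sin_pi] at h
  have hc : cos ((n:ℝ) * π) = (-1)^n := cos_k_pi n
  rw [hc] at h
  linear_combination -h - (n:ℝ)^2 * (pow_succ (-1:ℝ) n)

/-! ### Node injectivity -/

lemma xk_inj {n : ℕ} (hn : 2 ≤ n) {j k : ℕ} (hj : j ≤ n) (hk : k ≤ n)
    (h : xk n j = xk n k) : j = k := by
  have hn0 : (0:ℝ) < n := by positivity
  have hπ := Real.pi_pos
  have mem : ∀ m : ℕ, m ≤ n → (m : ℝ) * π / n ∈ Set.Icc 0 π := by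
    intro m hm
    have hm' : (m:ℝ) ≤ n := by exact_mod_cast hm
    constructor
    · positivity
    · rw [div_le_iff₀ hn0]; nlinarith
  have := Real.injOn_cos (mem j hj) (mem k hk) h
  have hj' : (j:ℝ) = k := by
    field_simp at this
    exact_mod_cast this
  exact_mod_cast hj'

/-! ### Degree bound for `chebT` -/

lemma natDegree_chebT_le (m : ℕ) : (chebT m).natDegree ≤ m := by
  induction m using Nat.strong_induction_on with
  | _ m ih =>
    match m with
    | 0 => simp [chebT, Polynomial.Chebyshev.T_zero]
    | 1 => simpa [chebT, Polynomial.Chebyshev.T_one] using Polynomial.natDegree_X_le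
    | (k+2) =>
      have h : chebT (k+2) = 2 * X * chebT (k+1) - chebT k := by
        rw [chebT, chebT, chebT]
        have := Polynomial.Chebyshev.T_add_two ℝ (k : ℤ)
        push_cast
        convert this using 2 <;> push_cast <;> ring
      rw [h]
      refine le_trans (Polynomial.natDegree_sub_le _ _) ?_
      have h1 : (2 * X * chebT (k+1)).natDegree ≤ k + 2 := by
        refine le_trans (Polynomial.natDegree_mul_le) ?_
        have : (2 * X : ℝ[X]).natDegree ≤ 1 := by
          refine le_trans (Polynomial.natDegree_mul_le) ?_
          simp
        have h2 := ih (k+1) (by omega)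
        omega
      have h2 : (chebT k).natDegree ≤ k + 2 := le_trans (ih k (by omega)) (by omega)
      omega

/-! ### Double root criterion -/

lemma double_root_dvd {p : ℝ[X]} {a : ℝ} (h : p.eval a = 0)
    (h2 : (derivative p).eval a = 0) : (X - C a)^2 ∣ p := by
  obtain ⟨g, hg⟩ := Polynomial.dvd_iff_isRoot.mpr h
  have hd : derivative p = g + (X - C a) * derivative g := by
    rw [hg]; simp [derivative_mul]
  have hga : g.eval a = 0 := by
    have := congrArg (Polynomial.eval a) hd
    simp [h2] at this
    linarith [this]
  obtain ⟨g2, hg2⟩ := Polynomial.dvd_iff_isRoot.mpr hga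
  exact ⟨g2, by rw [hg, hg2]; ring⟩

lemma coprime_X_sub_C {a b : ℝ} (h : a ≠ b) : IsCoprime (X - C a : ℝ[X]) (X - C b) := by
  refine ⟨C ((b - a)⁻¹), -C ((b - a)⁻¹), ?_⟩
  have hba : b - a ≠ 0 := sub_ne_zero.mpr (Ne.symm h)
  have : (C ((b - a)⁻¹) * (X - C a) + -C ((b - a)⁻¹) * (X - C b) : ℝ[X])
      = C ((b - a)⁻¹ * (b - a)) := by ring_nf; simp [C_mul]; ring
  rw [this, inv_mul_cancel₀ hba, C_1]

set_option maxHeartbeats 2000000 in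
/-- The Hermite interpolation identity: every polynomial `f` of degree at most
`2n-1` is reproduced by the Hermite interpolant with double nodes at the zeros
of `T_n'` and simple nodes at `±1`. -/
theorem hermite_interpolation (n : ℕ) (hn : 2 ≤ n) (f : Polynomial ℝ)
    (hf : f.natDegree ≤ 2 * n - 1) (x : ℝ) :
    f.eval x =
      ((derivative (chebT n)).eval x) ^ 2 / (2 * (n : ℝ) ^ 4)
          * ((1 + x) * f.eval (xk n 0) + (1 - x) * f.eval (xk n n))
        + (1 - x ^ 2) * ∑ k ∈ Finset.Icc 1 (n - 1),
            (ell n k x) ^ 2 / (1 - xk n k ^ 2) ^ 2 * Lk n k f x := by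
  classical
  set D : ℝ[X] := derivative (chebT n) with hD
  set q : ℕ → ℝ[X] := fun k => D / (X - C (xk n k)) with hq
  set d : ℕ → ℝ := fun k => (derivative D).eval (xk n k) with hd
  set lin : ℕ → ℝ[X] := fun k =>
    C (f.eval (xk n k)) * (1 - C (xk n k) * X)
      + C ((1 - xk n k ^ 2) * (derivative f).eval (xk n k)) * (X - C (xk n k)) with hlin
  set g : ℕ → ℝ[X] := fun k =>
    C (((1 - xk n k ^ 2)⁻¹)^2 * ((d k)⁻¹)^2) * (q k)^2 * lin k with hg
  set P : ℝ[X] :=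
    C (1/(2*(n:ℝ)^4)) * D^2 * (C (f.eval 1) * (1 + X) + C (f.eval (-1)) * (1 - X))
      + (1 - X^2) * ∑ k ∈ Finset.Icc 1 (n-1), g k with hP
  suffices hfP : f = P by
    conv_lhs => rw [hfP]
    rw [xk_zero, xk_n n hn, hP]
    simp only [eval_add, eval_mul, eval_sub, eval_one, eval_pow, eval_X, eval_C,
      eval_finset_sum]
    congr 1
    · ring
    · congr 1
      refine Finset.sum_congr rfl (fun k hk => ?_)
      rw [hg]
      simp only [eval_add, eval_mul, eval_sub, eval_one, eval_pow, eval_X, eval_C, hlin]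
      rw [ell, Lk]; simp only [hq, hd, hD]
      obtain ⟨hk1, hk2⟩ := Finset.mem_Icc.mp hk
      have hs : (1 - xk n k ^ 2) ≠ 0 := ne_of_gt (one_sub_xk_sq_pos hn hk1 hk2)
      have hdk : (derivative (derivative (chebT n))).eval (xk n k) ≠ 0 := D1_at_xk_ne hn hk1 hk2
      field_simp
  -- ### Factorization of D at interior nodes
  have hq_fac : ∀ k ∈ Finset.Icc 1 (n-1), D = (X - C (xk n k)) * q k := by
    intro k hk
    obtain ⟨hk1, hk2⟩ := Finset.mem_Icc.mp hk
    exact (EuclideanDomain.mul_div_cancel' (X_sub_C_ne_zero _)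
      (dvd_iff_isRoot.mpr (D_at_xk hn hk1 hk2))).symm
  have hq_self : ∀ k ∈ Finset.Icc 1 (n-1), (q k).eval (xk n k) = d k := by
    intro k hk
    have h := congrArg derivative (hq_fac k hk)
    have h2 := congrArg (eval (xk n k)) h
    simp [derivative_mul, derivative_sub] at h2
    rw [hd]
    simp [h2]
  have hq_other : ∀ k ∈ Finset.Icc 1 (n-1), ∀ j ∈ Finset.Icc 1 (n-1), j ≠ k →
      (q k).eval (xk n j) = 0 := by
    intro k hk j hj hjk
    obtain ⟨hk1, hk2⟩ := Finset.mem_Icc.mp hk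
    obtain ⟨hj1, hj2⟩ := Finset.mem_Icc.mp hj
    have h := congrArg (eval (xk n j)) (hq_fac k hk)
    rw [D_at_xk hn hj1 hj2] at h
    simp only [eval_mul, eval_sub, eval_X, eval_C] at h
    have hne : xk n j - xk n k ≠ 0 := by
      refine sub_ne_zero.mpr (fun hcontra => hjk ?_)
      exact xk_inj hn (by omega) (by omega) hcontra
    rcases mul_eq_zero.mp h.symm with h' | h'
    · exact absurd h' hne
    · exact h'
  have hq_der : ∀ k ∈ Finset.Icc 1 (n-1),
      (derivative (derivative D)).eval (xk n k) = 2 * (derivative (q k)).eval (xk n k) := by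
    intro k hk
    have h := congrArg derivative (congrArg derivative (hq_fac k hk))
    have h2 := congrArg (eval (xk n k)) h
    simp [derivative_mul, derivative_sub] at h2
    rw [h2]; ring
  -- ### Evaluations of P at the nodes
  have hn0 : (n:ℝ) ≠ 0 := by positivity
  have hP1 : P.eval (xk n 0) = f.eval (xk n 0) := by
    rw [xk_zero, hP]
    simp only [eval_add, eval_mul, eval_sub, eval_one, eval_pow, eval_X, eval_C]
    rw [hD, D_at_one n]
    norm_num
    field_simp
  have hPn : P.eval (xk n n) = f.eval (xk n n) := by
    rw [xk_n n hn, hP]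
    simp only [eval_add, eval_mul, eval_sub, eval_one, eval_pow, eval_X, eval_C]
    rw [hD, D_at_negone n]
    have hsq : (((-1:ℝ))^(n+1) * (n:ℝ)^2)^2 = (n:ℝ)^4 := by
      rw [mul_pow, ← pow_mul]
      have : Even ((n+1)*2) := ⟨n+1, by ring⟩
      rw [this.neg_one_pow]
      ring
    rw [hsq]
    norm_num
    field_simp
  have hPj : ∀ j ∈ Finset.Icc 1 (n-1), P.eval (xk n j) = f.eval (xk n j) := by
    intro j hj
    obtain ⟨hj1, hj2⟩ := Finset.mem_Icc.mp hj
    have hs : (1 - xk n j ^ 2) ≠ 0 := ne_of_gt (one_sub_xk_sq_pos hn hj1 hj2)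
    have hdk : d j ≠ 0 := D1_at_xk_ne hn hj1 hj2
    rw [hP]
    simp only [eval_add, eval_mul, eval_sub, eval_one, eval_pow, eval_X, eval_C,
      eval_finset_sum]
    rw [hD, D_at_xk hn hj1 hj2]
    rw [Finset.sum_eq_single_of_mem j hj (fun b hb hbj => by
      simp [hg, hq_other b hb j hj hbj.symm])]
    rw [hg]
    simp only [eval_add, eval_mul, eval_sub, eval_one, eval_pow, eval_X, eval_C, hlin]
    rw [hq_self j hj]
    field_simp
    ring
  have hP'j : ∀ j ∈ Finset.Icc 1 (n-1),
      (derivative P).eval (xk n j) = (derivative f).eval (xk n j) := by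
    intro j hj
    obtain ⟨hj1, hj2⟩ := Finset.mem_Icc.mp hj
    have hs : (1 - xk n j ^ 2) ≠ 0 := ne_of_gt (one_sub_xk_sq_pos hn hj1 hj2)
    have hdk : d j ≠ 0 := D1_at_xk_ne hn hj1 hj2
    have h3 : (derivative (derivative D)).eval (xk n j) * (1 - xk n j ^ 2)
        = 3 * xk n j * d j := by
      have := D2_at_xk hn hj1 hj2
      rw [hD, hd]
      exact this
    have h2q := hq_der j hj
    rw [hP]
    simp only [derivative_add, derivative_mul, derivative_sub, derivative_one,
      derivative_C, derivative_X, derivative_pow, derivative_sum]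
    simp only [eval_add, eval_mul, eval_sub, eval_one, eval_pow, eval_X, eval_C,
      eval_finset_sum]
    rw [hD]
    simp only [eval_zero]
    rw [D_at_xk hn hj1 hj2]
    rw [Finset.sum_eq_single_of_mem j hj (fun b hb hbj => by
      simp [hg, hq_other b hb j hj hbj.symm])]
    rw [Finset.sum_eq_single_of_mem j hj (fun b hb hbj => by
      simp [hg, derivative_mul, derivative_pow, hq_other b hb j hj hbj.symm])]
    have hq'v : (derivative (q j)).eval (xk n j)
        = 3 * xk n j * d j / (2 * (1 - xk n j ^ 2)) := by
      rw [eq_div_iff (mul_ne_zero two_ne_zero hs)]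
      linear_combination h3 - (1 - xk n j ^ 2) * h2q
    simp only [hg, hlin, derivative_mul, derivative_pow, derivative_add, derivative_sub,
      derivative_one, derivative_C, derivative_X, eval_add, eval_mul, eval_sub, eval_one,
      eval_pow, eval_X, eval_C, eval_zero]
    rw [hq_self j hj, hq'v]
    field_simp
    ring
  -- ### Degree bounds
  have hDdeg : D.natDegree ≤ n - 1 := by
    rw [hD]
    exact le_trans (natDegree_derivative_le _) (Nat.sub_le_sub_right (natDegree_chebT_le n) 1)
  have hqdeg : ∀ k ∈ Finset.Icc 1 (n-1), (q k).natDegree ≤ n - 2 := by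
    intro k hk
    by_cases hq0 : q k = 0
    · simp [hq0]
    · have h := hq_fac k hk
      have h2 : D.natDegree = 1 + (q k).natDegree := by
        rw [h, natDegree_mul (X_sub_C_ne_zero _) hq0, natDegree_X_sub_C]
      omega
  have hlindeg : ∀ k, (lin k).natDegree ≤ 1 := by
    intro k
    rw [hlin]
    refine le_trans (natDegree_add_le _ _) (max_le ?_ ?_)
    · refine le_trans natDegree_mul_le ?_
      have h1 : (1 - C (xk n k) * X : ℝ[X]).natDegree ≤ 1 := by
        refine le_trans (natDegree_sub_le _ _) (max_le (by simp) ?_)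
        refine le_trans natDegree_mul_le ?_
        simp
      simp only [natDegree_C]
      omega
    · refine le_trans natDegree_mul_le ?_
      have h1 : (X - C (xk n k) : ℝ[X]).natDegree ≤ 1 := le_of_eq (natDegree_X_sub_C _)
      simp only [natDegree_C]
      omega
  have hPdeg : P.natDegree ≤ 2 * n - 1 := by
    rw [hP]
    refine le_trans (natDegree_add_le _ _) (max_le ?_ ?_)
    · refine le_trans natDegree_mul_le ?_
      have h1 : (C (1/(2*(n:ℝ)^4)) * D^2).natDegree ≤ 2 * n - 2 := by
        refine le_trans natDegree_mul_le ?_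
        have := natDegree_pow_le (p := D) (n := 2)
        simp only [natDegree_C]
        omega
      have h2 : (C (f.eval 1) * (1 + X) + C (f.eval (-1)) * (1 - X) : ℝ[X]).natDegree ≤ 1 := by
        refine le_trans (natDegree_add_le _ _) (max_le ?_ ?_) <;>
        · refine le_trans natDegree_mul_le ?_
          have : ((1 : ℝ[X]) + X).natDegree ≤ 1 :=
            le_trans (natDegree_add_le _ _) (by simp)
          have : ((1 : ℝ[X]) - X).natDegree ≤ 1 :=
            le_trans (natDegree_sub_le _ _) (by simp)
          simp only [natDegree_C]
          omega
      omega
    · refine le_trans natDegree_mul_le ?_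
      have h1 : ((1 : ℝ[X]) - X^2).natDegree ≤ 2 :=
        le_trans (natDegree_sub_le _ _) (by simp)
      have h2 : (∑ k ∈ Finset.Icc 1 (n-1), g k).natDegree ≤ 2 * n - 3 := by
        refine natDegree_sum_le_of_forall_le _ _ (fun k hk => ?_)
        rw [hg]
        refine le_trans natDegree_mul_le ?_
        have h3 : (C (((1 - xk n k ^ 2)⁻¹)^2 * ((d k)⁻¹)^2) * (q k)^2).natDegree
            ≤ 2 * n - 4 := by
          refine le_trans natDegree_mul_le ?_
          have h4 := natDegree_pow_le (p := q k) (n := 2)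
          have h5 := hqdeg k hk
          simp only [natDegree_C]
          omega
        have h6 := hlindeg k
        omega
      omega
  have hΦdeg : (P - f).natDegree ≤ 2 * n - 1 :=
    le_trans (natDegree_sub_le _ _) (max_le hPdeg hf)
  -- ### Divisibility
  set Φ : ℝ[X] := P - f with hΦ
  have hroot : ∀ j, j ≤ n → Φ.eval (xk n j) = 0 := by
    intro j hjn
    rcases Nat.eq_zero_or_pos j with rfl | hj0
    · simp [hΦ, hP1]
    · rcases eq_or_lt_of_le hjn with rfl | hjlt
      · simp [hΦ, hPn]
      · have : j ∈ Finset.Icc 1 (n-1) := Finset.mem_Icc.mpr ⟨hj0, by omega⟩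
        simp [hΦ, hPj j this]
  have hne_nodes : ∀ i j, i ≤ n → j ≤ n → i ≠ j → xk n i ≠ xk n j := by
    intro i j hi hj hij hcontra
    exact hij (xk_inj hn hi hj hcontra)
  have hdvd0 : (X - C (xk n 0)) ∣ Φ := dvd_iff_isRoot.mpr (hroot 0 (by omega))
  have hdvdn : (X - C (xk n n)) ∣ Φ := dvd_iff_isRoot.mpr (hroot n le_rfl)
  have hdvdk : ∀ k ∈ Finset.Icc 1 (n-1), (X - C (xk n k))^2 ∣ Φ := by
    intro k hk
    obtain ⟨hk1, hk2⟩ := Finset.mem_Icc.mp hk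
    refine double_root_dvd (hroot k (by omega)) ?_
    have : derivative Φ = derivative P - derivative f := by rw [hΦ, derivative_sub]
    rw [this]
    simp [hP'j k hk]
  have hprod : (∏ k ∈ Finset.Icc 1 (n-1), (X - C (xk n k))^2) ∣ Φ := by
    refine Finset.prod_dvd_of_coprime ?_ hdvdk
    intro i hi j hj hij
    obtain ⟨hi1, hi2⟩ := Finset.mem_Icc.mp (Finset.mem_coe.mp hi)
    obtain ⟨hj1, hj2⟩ := Finset.mem_Icc.mp (Finset.mem_coe.mp hj)
    exact (coprime_X_sub_C (hne_nodes i j (by omega) (by omega) hij)).pow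
  set Q : ℝ[X] := (X - C (xk n 0)) * (X - C (xk n n))
      * ∏ k ∈ Finset.Icc 1 (n-1), (X - C (xk n k))^2 with hQdef
  have hcop_k : ∀ (i : ℕ), i ≤ n → (∀ k ∈ Finset.Icc 1 (n-1), i ≠ k) →
      IsCoprime (X - C (xk n i)) (∏ k ∈ Finset.Icc 1 (n-1), (X - C (xk n k))^2) := by
    intro i hi hik
    refine IsCoprime.prod_right (fun k hk => ?_)
    obtain ⟨hk1, hk2⟩ := Finset.mem_Icc.mp hk
    exact IsCoprime.pow_right (coprime_X_sub_C (hne_nodes i k hi (by omega) (hik k hk)))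
  have hQdvd : Q ∣ Φ := by
    rw [hQdef]
    have h0n : IsCoprime (X - C (xk n 0)) (X - C (xk n n)) :=
      coprime_X_sub_C (hne_nodes 0 n (by omega) le_rfl (by omega))
    have hc1 := hcop_k 0 (by omega) (fun k hk => by
      obtain ⟨hk1, _⟩ := Finset.mem_Icc.mp hk; omega)
    have hc2 := hcop_k n le_rfl (fun k hk => by
      obtain ⟨_, hk2⟩ := Finset.mem_Icc.mp hk; omega)
    refine IsCoprime.mul_dvd (IsCoprime.mul_left hc1 hc2) ?_ hprod
    exact IsCoprime.mul_dvd h0n hdvd0 hdvdn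
  have hQmonic : Q.Monic := by
    rw [hQdef]
    exact ((monic_X_sub_C _).mul (monic_X_sub_C _)).mul
      (monic_prod_of_monic _ _ (fun k _ => (monic_X_sub_C _).pow 2))
  have hQdeg : Q.natDegree = 2 * n := by
    rw [hQdef]
    rw [natDegree_mul (((monic_X_sub_C _).mul (monic_X_sub_C _)).ne_zero)
        (monic_prod_of_monic _ _ (fun k _ => (monic_X_sub_C _).pow 2)).ne_zero,
      natDegree_mul (X_sub_C_ne_zero _) (X_sub_C_ne_zero _),
      natDegree_X_sub_C, natDegree_X_sub_C,
      natDegree_prod _ _ (fun k _ => pow_ne_zero 2 (X_sub_C_ne_zero _))]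
    have : ∀ k ∈ Finset.Icc 1 (n-1), ((X - C (xk n k))^2).natDegree = 2 := by
      intro k _
      rw [(monic_X_sub_C _).natDegree_pow, natDegree_X_sub_C]
    rw [Finset.sum_congr rfl this, Finset.sum_const, Nat.card_Icc, smul_eq_mul]
    omega
  have hΦ0 : Φ = 0 := by
    by_contra hΦne
    have hdle := Polynomial.degree_le_of_dvd hQdvd hΦne
    rw [Polynomial.degree_eq_natDegree hΦne, Polynomial.degree_eq_natDegree hQmonic.ne_zero]
      at hdle
    have : Q.natDegree ≤ Φ.natDegree := by exact_mod_cast hdle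
    omega
  have := sub_eq_zero.mp hΦ0
  exact this.symm
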